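/- Let G be a group equipped with an action of ℂˣ by group automorphisms, and let χ : G → ℂˣ be a group homomorphism satisfying χ(g^λ) = χ(g) for all g ∈ G and λ ∈ ℂˣ. Then the twisted product g ∗ h = g · h^{χ(g)⁻¹} makes the underlying set of G into a group G_χ: the operation ∗ is associative, the identity element 1 of G is a two-sided identity for ∗, and for every g ∈ G the element (g⁻¹)^{χ(g)} is a two-sided inverse of g with respect to ∗. -/

import Mathlib

/-- The twisted product `g ∗ h = g · h^{χ(g)⁻¹}` on a group `G` equipped with an
action `φ` of `ℂˣ` by group automorphisms and a character `χ : G → ℂˣ`. -/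
def twistedMul {G : Type*} [Group G] (φ : ℂˣ →* MulAut G) (χ : G →* ℂˣ) (g h : G) : G :=
  g * φ (χ g)⁻¹ h

/-- The twisted product makes the underlying set of `G` into a group `G_χ`:
it is associative, `1` is a two-sided identity, and `(g⁻¹)^{χ(g)}` is a two-sided
inverse of `g`. -/
theorem statement0 {G : Type*} [Group G] (φ : ℂˣ →* MulAut G) (χ : G →* ℂˣ)
    (hχ : ∀ (g : G) (l : ℂˣ), χ (φ l g) = χ g) :
    (∀ g h k : G, twistedMul φ χ (twistedMul φ χ g h) k
        = twistedMul φ χ g (twistedMul φ χ h k)) ∧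
    (∀ g : G, twistedMul φ χ 1 g = g) ∧
    (∀ g : G, twistedMul φ χ g 1 = g) ∧
    (∀ g : G, twistedMul φ χ g (φ (χ g) g⁻¹) = 1) ∧
    (∀ g : G, twistedMul φ χ (φ (χ g) g⁻¹) g = 1) := by
  have hχ' : ∀ (g : G) (l : ℂˣ), χ ((φ l)⁻¹ g) = χ g := by
    intro g l
    have : (φ l)⁻¹ = φ l⁻¹ := by rw [map_inv]
    rw [this, hχ]
  have hcomm : ∀ (a b : ℂˣ) (x : G), (φ a)⁻¹ ((φ b)⁻¹ x) = (φ b)⁻¹ ((φ a)⁻¹ x) := by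
    intro a b x
    have : (φ a)⁻¹ * (φ b)⁻¹ = (φ b)⁻¹ * (φ a)⁻¹ := by
      rw [← map_inv, ← map_inv, ← map_mul, ← map_mul, mul_comm]
    calc (φ a)⁻¹ ((φ b)⁻¹ x) = ((φ a)⁻¹ * (φ b)⁻¹) x := rfl
      _ = ((φ b)⁻¹ * (φ a)⁻¹) x := by rw [this]
      _ = (φ b)⁻¹ ((φ a)⁻¹ x) := rfl
  refine ⟨?_, ?_, ?_, ?_, ?_⟩ <;> intros <;>
    simp [twistedMul, hχ, hχ', hcomm, map_mul, mul_assoc]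
  simp only [← MulAut.inv_apply, hχ']
  exact hcomm _ _ _
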